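/- Let s, k, t, m, n_1, ..., n_t be positive integers with n_1 ≥ n_2 ≥ ... ≥ n_t ≥ k, let H be a graph on m vertices, and let n = n_1 + ... + n_t + s + m. Then the number of edges of K_s ∨ (H ∪ K_{n_1} ∪ ... ∪ K_{n_t}) is at most the number of edges of K_s ∨ (H ∪ K_{n−m−s−k(t−1)} ∪ (t−1)K_k), with equality if and only if n_2 = n_3 = ... = n_t = k. -/

import Mathlib

open SimpleGraph

/-- The join of two simple graphs: their disjoint union together with all
edges between the two parts. -/
def gJoin {α β : Type*} (G : SimpleGraph α) (H : SimpleGraph β) : SimpleGraph (α ⊕ β) :=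
  (G ⊕g H) ⊔ SimpleGraph.fromRel (fun x y => x.isLeft ∧ y.isRight)

/-- The disjoint union of complete graphs `K_{n 0} ∪ … ∪ K_{n (t-1)}`. -/
def cliqueUnion {t : ℕ} (n : Fin t → ℕ) : SimpleGraph (Σ i, Fin (n i)) where
  Adj x y := x.1 = y.1 ∧ x ≠ y
  symm := ⟨fun _ _ h => ⟨h.1.symm, h.2.symm⟩⟩
  loopless := ⟨fun _ h => h.2 rfl⟩

@[simp] lemma gJoin_adj_ll {α β : Type*} (G : SimpleGraph α) (K : SimpleGraph β) (a b : α) :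
    (gJoin G K).Adj (Sum.inl a) (Sum.inl b) ↔ G.Adj a b := by simp [gJoin]
@[simp] lemma gJoin_adj_lr {α β : Type*} (G : SimpleGraph α) (K : SimpleGraph β) (a : α) (b : β) :
    (gJoin G K).Adj (Sum.inl a) (Sum.inr b) := by simp [gJoin]
@[simp] lemma gJoin_adj_rl {α β : Type*} (G : SimpleGraph α) (K : SimpleGraph β) (a : β) (b : α) :
    (gJoin G K).Adj (Sum.inr a) (Sum.inl b) := by simp [gJoin]
@[simp] lemma gJoin_adj_rr {α β : Type*} (G : SimpleGraph α) (K : SimpleGraph β) (a b : β) :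
    (gJoin G K).Adj (Sum.inr a) (Sum.inr b) ↔ K.Adj a b := by simp [gJoin]

lemma sum_ite_ne {q : ℕ} (a : Fin q) {D : ∀ b : Fin q, Decidable (a ≠ b)} :
    (∑ b : Fin q, if a ≠ b then 1 else 0) = q - 1 := by
  refine (Finset.sum_congr rfl fun b _ => if_congr Iff.rfl rfl rfl).trans ?_
  rw [← Finset.card_filter]
  have : (Finset.univ.filter fun b : Fin q => a ≠ b) = Finset.univ.erase a := by
    ext b; simp [ne_comm]
  rw [this, Finset.card_erase_of_mem (Finset.mem_univ a)]
  simp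

lemma sum_ite_clique {t : ℕ} (nf : Fin t → ℕ) (x : Σ i, Fin (nf i))
    {D : ∀ y : Σ i, Fin (nf i), Decidable ((cliqueUnion nf).Adj x y)} :
    (∑ y : Σ i, Fin (nf i), if (cliqueUnion nf).Adj x y then 1 else 0) = nf x.1 - 1 := by
  classical
  refine (Finset.sum_congr rfl fun b _ => if_congr Iff.rfl rfl rfl).trans ?_
  obtain ⟨j, a⟩ := x
  rw [← Finset.univ_sigma_univ, Finset.sum_sigma]
  rw [Finset.sum_eq_single j]
  · have h : ∀ b : Fin (nf j), ((cliqueUnion nf).Adj ⟨j, a⟩ ⟨j, b⟩ ↔ a ≠ b) := by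
      intro b
      constructor
      · rintro ⟨-, hne⟩ rfl; exact hne rfl
      · intro hne; exact ⟨rfl, by simpa [Sigma.mk.inj_iff] using hne⟩
    refine (Finset.sum_congr rfl fun b _ => if_congr (h b) rfl rfl).trans ?_
    exact sum_ite_ne a
  · intro i _ hij
    apply Finset.sum_eq_zero
    intro b _
    have : ¬ (cliqueUnion nf).Adj ⟨j, a⟩ ⟨i, b⟩ := fun h => hij h.1.symm
    simp [this]
  · simp

lemma sum_sigma_card {t : ℕ} (nf : Fin t → ℕ) (f : ℕ → ℕ) :
    (∑ x : Σ i, Fin (nf i), f (nf x.1)) = ∑ i, nf i * f (nf i) := by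
  rw [← Finset.univ_sigma_univ, Finset.sum_sigma]
  simp [mul_comm]

open Classical in
lemma twice_ncard (s m t : ℕ) (nf : Fin t → ℕ) (H : SimpleGraph (Fin m)) :
    2 * (gJoin (⊤ : SimpleGraph (Fin s)) (H ⊕g cliqueUnion nf)).edgeSet.ncard =
      s * (s - 1) + 2 * (s * (m + ∑ i, nf i)) + 2 * H.edgeSet.ncard
        + ∑ i, nf i * (nf i - 1) := by
  set J := gJoin (⊤ : SimpleGraph (Fin s)) (H ⊕g cliqueUnion nf) with hJ
  rw [Set.ncard_eq_toFinset_card', ← SimpleGraph.edgeFinset,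
    ← SimpleGraph.sum_degrees_eq_twice_card_edges]
  have hdeg : ∀ v, J.degree v = ∑ w, if J.Adj v w then 1 else 0 := by
    intro v
    rw [← SimpleGraph.card_neighborFinset_eq_degree, neighborFinset_eq_filter,
      Finset.card_filter]
  have hH : (∑ a : Fin m, ∑ b : Fin m, if H.Adj a b then 1 else 0) = 2 * H.edgeSet.ncard := by
    rw [Set.ncard_eq_toFinset_card', ← SimpleGraph.edgeFinset,
      ← SimpleGraph.sum_degrees_eq_twice_card_edges]
    refine Finset.sum_congr rfl fun a _ => ?_
    rw [← SimpleGraph.card_neighborFinset_eq_degree, neighborFinset_eq_filter,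
      Finset.card_filter]
  simp_rw [hdeg]
  rw [Fintype.sum_sum_type]
  simp_rw [Fintype.sum_sum_type, hJ, gJoin_adj_lr, gJoin_adj_rl, gJoin_adj_ll, gJoin_adj_rr,
    if_true, top_adj, SimpleGraph.sum_adj]
  rw [Finset.sum_congr rfl fun a _ => congrArg₂ (· + ·) (sum_ite_ne a) rfl]
  simp only [Finset.sum_const, Finset.card_univ, Fintype.card_fin, Fintype.card_sigma,
    smul_eq_mul, mul_one, if_false, Finset.sum_add_distrib]
  rw [Finset.sum_congr rfl (fun x _ => sum_ite_clique nf x), sum_sigma_card nf (· - 1), hH]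
  ring

lemma step_ineq (x y : ℕ) (h2 : 2 ≤ y) (hxy : y ≤ x) :
    x * (x - 1) + y * (y - 1) < (x + 1) * x + (y - 1) * (y - 1 - 1) := by
  obtain ⟨y', rfl⟩ : ∃ y', y = y' + 2 := ⟨y - 2, by omega⟩
  obtain ⟨x', rfl⟩ : ∃ x', x = x' + y' + 2 := ⟨x - (y' + 2), by omega⟩
  have h1 : x' + y' + 2 - 1 = x' + y' + 1 := by omega
  have h2 : y' + 2 - 1 = y' + 1 := by omega
  have h3 : y' + 1 - 1 = y' := by omega
  rw [h1, h2, h3]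
  nlinarith

lemma key (t k : ℕ) (ht : 0 < t) (hk : 0 < k) :
    ∀ M (nf : Fin t → ℕ), (∑ i ∈ Finset.univ.erase (⟨0, ht⟩ : Fin t), (nf i - k)) = M →
    (∀ i, nf i ≤ nf ⟨0, ht⟩) → (∀ i, k ≤ nf i) →
    (∑ i, nf i * (nf i - 1)) ≤
        ((∑ i, nf i) - k * (t - 1)) * (((∑ i, nf i) - k * (t - 1)) - 1) + (t - 1) * (k * (k - 1)) ∧
      ((∃ j, j ≠ (⟨0, ht⟩ : Fin t) ∧ nf j ≠ k) →
        (∑ i, nf i * (nf i - 1)) <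
          ((∑ i, nf i) - k * (t - 1)) * (((∑ i, nf i) - k * (t - 1)) - 1) + (t - 1) * (k * (k - 1))) := by
  intro M
  induction M using Nat.strong_induction_on with
  | _ M ih =>
    intro nf hM h0 hk'
    set z : Fin t := ⟨0, ht⟩ with hz
    have hcard : (Finset.univ.erase z).card = t - 1 := by
      rw [Finset.card_erase_of_mem (Finset.mem_univ z)]
      simp
    have eq1 : ∀ g : Fin t → ℕ, (∑ i, g i) = g z + ∑ i ∈ Finset.univ.erase z, g i :=
      fun g => (Finset.add_sum_erase _ g (Finset.mem_univ z)).symm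
    rcases Nat.eq_zero_or_pos M with hM0 | hMpos
    · have hall : ∀ i ∈ Finset.univ.erase z, nf i = k := by
        intro i hi
        have := Finset.sum_eq_zero_iff.mp (hM.trans hM0) i hi
        have := hk' i
        omega
      have hsum : (∑ i, nf i) = nf z + (t - 1) * k := by
        rw [eq1 nf, Finset.sum_congr rfl hall, Finset.sum_const, hcard, smul_eq_mul]
      have hzval : (∑ i, nf i) - k * (t - 1) = nf z := by
        rw [hsum, mul_comm k (t-1)]; omega
      have hfs : (∑ i, nf i * (nf i - 1)) = nf z * (nf z - 1) + (t - 1) * (k * (k - 1)) := by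
        rw [eq1 (fun i => nf i * (nf i - 1))]
        congr 1
        rw [Finset.sum_congr rfl (fun i hi => by rw [hall i hi]), Finset.sum_const, hcard,
          smul_eq_mul]
      rw [hzval, hfs]
      refine ⟨le_refl _, ?_⟩
      rintro ⟨j, hjz, hjk⟩
      exact absurd (hall j (Finset.mem_erase.mpr ⟨hjz, Finset.mem_univ j⟩)) hjk
    · obtain ⟨j, hjmem, hjpos⟩ := Finset.exists_ne_zero_of_sum_ne_zero
        (by omega : (∑ i ∈ Finset.univ.erase z, (nf i - k)) ≠ 0)
      have hjz : j ≠ z := (Finset.mem_erase.mp hjmem).1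
      have hjk : k < nf j := by have := hk' j; omega
      set nf₂ : Fin t → ℕ := Function.update (Function.update nf j (nf j - 1)) z (nf z + 1) with hnf₂
      have hv : ∀ i, nf₂ i = if i = z then nf z + 1 else if i = j then nf j - 1 else nf i := by
        intro i
        by_cases h1 : i = z
        · subst h1; simp [hnf₂, Function.update]
        · by_cases h2 : i = j
          · subst h2; simp [hnf₂, Function.update, h1]
          · simp [hnf₂, Function.update, h1, h2]
      have hvz : nf₂ z = nf z + 1 := by rw [hv]; simp
      have hvj : nf₂ j = nf j - 1 := by rw [hv]; simp [hjz]
      have hvo : ∀ i, i ≠ z → i ≠ j → nf₂ i = nf i := by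
        intro i h1 h2; rw [hv]; simp [h1, h2]
      have hjmem' : j ∈ Finset.univ.erase z := hjmem
      have eq2 : ∀ g : Fin t → ℕ,
          (∑ i ∈ Finset.univ.erase z, g i) = g j + ∑ i ∈ (Finset.univ.erase z).erase j, g i :=
        fun g => (Finset.add_sum_erase _ g hjmem').symm
      have hcongr : ∀ g g' : Fin t → ℕ, (∀ i, i ≠ z → i ≠ j → g i = g' i) →
          (∑ i ∈ (Finset.univ.erase z).erase j, g i) = ∑ i ∈ (Finset.univ.erase z).erase j, g' i := by
        intro g g' h
        refine Finset.sum_congr rfl fun i hi => ?_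
        have h1 := (Finset.mem_erase.mp hi).1
        have h2 := (Finset.mem_erase.mp (Finset.mem_erase.mp hi).2).1
        exact h i h2 h1
      have hco : ∀ F : ℕ → ℕ,
          (∑ i ∈ (Finset.univ.erase z).erase j, F (nf₂ i)) =
            ∑ i ∈ (Finset.univ.erase z).erase j, F (nf i) := by
        intro F
        refine Finset.sum_congr rfl fun i hi => ?_
        have h1 := (Finset.mem_erase.mp hi).1
        have h2 := (Finset.mem_erase.mp (Finset.mem_erase.mp hi).2).1
        rw [hvo i h2 h1]
      have expand : ∀ g : Fin t → ℕ,
          (∑ i, g i) = g z + (g j + ∑ i ∈ (Finset.univ.erase z).erase j, g i) := by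
        intro g; rw [eq1 g, eq2 g]
      have expand2 : ∀ F : ℕ → ℕ,
          (∑ i, F (nf₂ i)) = F (nf z + 1) + (F (nf j - 1) + ∑ i ∈ (Finset.univ.erase z).erase j, F (nf i)) := by
        intro F
        have := expand (fun i => F (nf₂ i))
        rw [hvz, hvj] at this
        rw [this, hco F]
      have hsum2 : (∑ i, nf₂ i) = ∑ i, nf i := by
        rw [expand nf₂, expand nf, hvz, hvj, hcongr nf₂ nf hvo]
        omega
      have hmeas : (∑ i ∈ Finset.univ.erase z, (nf₂ i - k)) = M - 1 := by
        have e1 : (∑ i ∈ Finset.univ.erase z, (nf₂ i - k)) =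
            (nf j - 1 - k) + ∑ i ∈ (Finset.univ.erase z).erase j, (nf i - k) := by
          have := eq2 (fun i => nf₂ i - k)
          rw [this, hvj, hco (fun x => x - k)]
        have e2 : M = (nf j - k) + ∑ i ∈ (Finset.univ.erase z).erase j, (nf i - k) := by
          rw [← hM, eq2 (fun i => nf i - k)]
        omega
      have h0₂ : ∀ i, nf₂ i ≤ nf₂ z := by
        intro i
        rw [hvz, hv i]
        split
        · omega
        · split
          · have := h0 j; omega
          · have := h0 i; omega
      have hk₂ : ∀ i, k ≤ nf₂ i := by
        intro i
        rw [hv i]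
        split
        · have := hk' z; omega
        · split
          · omega
          · exact hk' i
      have hstep : (∑ i, nf i * (nf i - 1)) < ∑ i, nf₂ i * (nf₂ i - 1) := by
        rw [expand2 (fun x => x * (x - 1)), expand (fun i => nf i * (nf i - 1))]
        simp only [Nat.add_sub_cancel]
        have := step_ineq (nf z) (nf j) (by omega) (h0 j)
        omega
      have := ih (M - 1) (by omega) nf₂ hmeas h0₂ hk₂
      rw [hsum2] at this
      exact ⟨by omega, fun _ => by omega⟩

lemma sum_ite_z {t : ℕ} (ht : 0 < t) (A c : ℕ) (F : ℕ → ℕ) :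
    (∑ i : Fin t, F (if i = ⟨0, ht⟩ then A else c)) = F A + (t - 1) * F c := by
  have e : (∑ i : Fin t, F (if i = ⟨0, ht⟩ then A else c)) =
      F (if (⟨0, ht⟩ : Fin t) = ⟨0, ht⟩ then A else c) +
        ∑ i ∈ Finset.univ.erase (⟨0, ht⟩ : Fin t), F (if i = ⟨0, ht⟩ then A else c) :=
    (Finset.add_sum_erase _ _ (Finset.mem_univ _)).symm
  rw [e, if_pos rfl,
    Finset.sum_congr rfl (fun i hi => by rw [if_neg (Finset.mem_erase.mp hi).1]),
    Finset.sum_const, Finset.card_erase_of_mem (Finset.mem_univ _), smul_eq_mul]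
  simp

theorem size_clique_union_join (s k t m : ℕ) (hs : 0 < s) (hk : 0 < k)
    (ht : 0 < t) (hm : 0 < m) (nf : Fin t → ℕ)
    (hmono : ∀ i j : Fin t, i ≤ j → nf j ≤ nf i) (hnk : ∀ i, k ≤ nf i)
    (H : SimpleGraph (Fin m)) (n : ℕ) (hn : n = (∑ i, nf i) + s + m) :
    (gJoin (⊤ : SimpleGraph (Fin s)) (H ⊕g cliqueUnion nf)).edgeSet.ncard ≤
      (gJoin (⊤ : SimpleGraph (Fin s)) (H ⊕g cliqueUnion
        (fun i : Fin t => if i = ⟨0, ht⟩ then n - m - s - k * (t - 1) else k))).edgeSet.ncard ∧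
    ((gJoin (⊤ : SimpleGraph (Fin s)) (H ⊕g cliqueUnion nf)).edgeSet.ncard =
      (gJoin (⊤ : SimpleGraph (Fin s)) (H ⊕g cliqueUnion
        (fun i : Fin t => if i = ⟨0, ht⟩ then n - m - s - k * (t - 1) else k))).edgeSet.ncard ↔
      ∀ i : Fin t, i ≠ ⟨0, ht⟩ → nf i = k) := by
  have h0 : ∀ i, nf i ≤ nf ⟨0, ht⟩ := fun i => hmono ⟨0, ht⟩ i (by simp [Fin.le_def])
  have hkt : k * t ≤ ∑ i, nf i := by
    calc k * t = ∑ _i : Fin t, k := by simp [mul_comm]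
    _ ≤ ∑ i, nf i := Finset.sum_le_sum fun i _ => hnk i
  have h1 : k * (t - 1) ≤ ∑ i, nf i :=
    le_trans (Nat.mul_le_mul_left k (by omega)) hkt
  have hA : n - m - s - k * (t - 1) = (∑ i, nf i) - k * (t - 1) := by
    have : n - m - s = ∑ i, nf i := by omega
    rw [this]
  have hs1 : (∑ i : Fin t, (if i = ⟨0, ht⟩ then n - m - s - k * (t - 1) else k)) = ∑ i, nf i := by
    have e := sum_ite_z ht (n - m - s - k * (t - 1)) k (fun x => x)
    rw [e, hA, mul_comm (t - 1) k, Nat.sub_add_cancel h1]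
  have hP := twice_ncard s m t nf H
  have hQ := twice_ncard s m t
    (fun i : Fin t => if i = ⟨0, ht⟩ then n - m - s - k * (t - 1) else k) H
  rw [hs1, sum_ite_z ht (n - m - s - k * (t - 1)) k (fun x => x * (x - 1))] at hQ
  obtain ⟨hle, hlt⟩ := key t k ht hk
    (∑ i ∈ Finset.univ.erase (⟨0, ht⟩ : Fin t), (nf i - k)) nf rfl h0 hnk
  rw [← hA] at hle hlt
  have h2le : 2 * (gJoin (⊤ : SimpleGraph (Fin s)) (H ⊕g cliqueUnion nf)).edgeSet.ncard ≤
      2 * (gJoin (⊤ : SimpleGraph (Fin s)) (H ⊕g cliqueUnion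
        (fun i : Fin t => if i = ⟨0, ht⟩ then n - m - s - k * (t - 1) else k))).edgeSet.ncard := by
    rw [hP, hQ]
    exact Nat.add_le_add_left hle _
  refine ⟨Nat.le_of_mul_le_mul_left h2le (by norm_num), ?_, ?_⟩
  · intro heq
    by_contra hex
    push_neg at hex
    obtain ⟨i0, hi0, hne⟩ := hex
    have hstrict := hlt ⟨i0, hi0, hne⟩
    have h2lt : 2 * (gJoin (⊤ : SimpleGraph (Fin s)) (H ⊕g cliqueUnion nf)).edgeSet.ncard <
        2 * (gJoin (⊤ : SimpleGraph (Fin s)) (H ⊕g cliqueUnion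
          (fun i : Fin t => if i = ⟨0, ht⟩ then n - m - s - k * (t - 1) else k))).edgeSet.ncard := by
      rw [hP, hQ]
      exact Nat.add_lt_add_left hstrict _
    rw [heq] at h2lt
    exact lt_irrefl _ h2lt
  · intro hall
    have hfun : nf = fun i : Fin t => if i = ⟨0, ht⟩ then n - m - s - k * (t - 1) else k := by
      funext i
      by_cases hi : i = ⟨0, ht⟩
      · subst hi
        rw [if_pos rfl, hA]
        have hsz : (∑ i, nf i) = nf ⟨0, ht⟩ + (t - 1) * k := by
          rw [(Finset.add_sum_erase _ nf (Finset.mem_univ (⟨0, ht⟩ : Fin t))).symm,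
            Finset.sum_congr rfl (fun i hi => hall i (Finset.mem_erase.mp hi).1),
            Finset.sum_const, Finset.card_erase_of_mem (Finset.mem_univ _), smul_eq_mul,
            Finset.card_univ, Fintype.card_fin]
        rw [mul_comm k (t - 1)]
        omega
      · rw [if_neg hi]
        exact hall i hi
    exact congrArg (fun f => (gJoin (⊤ : SimpleGraph (Fin s))
      (H ⊕g cliqueUnion f)).edgeSet.ncard) hfun
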